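/- Let n ≥ 1. Let A be an n×(n−1) binary matrix with guard bits a_{i,−1} = 1 and a_{i,n−1} = 0, and let B be an (n−1)×n binary matrix with guard bits b_{−1,j} = 1 and b_{n−1,j} = 0. Define Δa_{i,j} = a_{i,j−1} − a_{i,j} and Δb_{i,j} = b_{i−1,j} − b_{i,j} for 0 ≤ i, j ≤ n−1. Then the energy E_d^{nn}(A,B) = (1/2)·Σ_{i=0}^{n−1} Σ_{j=0}^{n−1} (Δa_{i,j})^2 + (1/2)·Σ_{i=0}^{n−1} Σ_{j=0}^{n−1} (Δb_{i,j})^2 + (1/2)·Σ_{i=0}^{n−1} Σ_{j=0}^{n−1} (Δa_{i,j} − Δb_{i,j})^2 (a rational number) satisfies E_d^{nn}(A,B) ≥ n, and E_d^{nn}(A,B) = n if and only if every guard-extended row of A is a domain-wall vector, every guard-extended column of B is a domain-wall vector, and Δa_{i,j} = Δb_{i,j} for all i, j. -/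
import Mathlib


/-- Guard-extended row of the matrix `A` (rows of length `n-1`, guard bits
`a_{i,-1} = 1` at shifted index `0` and `a_{i,n-1} = 0` at shifted index `n`). -/
def gA (n : ℕ) (A : ℕ → ℕ → ℤ) (i j : ℕ) : ℤ :=
  if j = 0 then 1 else if j < n then A i (j - 1) else 0

/-- `Δa_{i,j} = a_{i,j-1} - a_{i,j}` computed on the guard-extended rows of `A`. -/
def dA (n : ℕ) (A : ℕ → ℕ → ℤ) (i j : ℕ) : ℤ := gA n A i j - gA n A i (j + 1)

/-- Guard-extended column of the matrix `B` (columns of length `m-1`, guard bits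
`b_{-1,j} = 1` at shifted index `0` and `b_{m-1,j} = 0` at shifted index `m`). -/
def gB (m : ℕ) (B : ℕ → ℕ → ℤ) (i j : ℕ) : ℤ :=
  if i = 0 then 1 else if i < m then B (i - 1) j else 0

/-- `Δb_{i,j} = b_{i-1,j} - b_{i,j}` computed on the guard-extended columns of `B`. -/
def dB (m : ℕ) (B : ℕ → ℕ → ℤ) (i j : ℕ) : ℤ := gB m B i j - gB m B (i + 1) j

/-- Row domain-wall condition: every guard-extended row of the `m × (n-1)` matrix `A`
is a domain-wall vector. -/
def RowDW (m n : ℕ) (A : ℕ → ℕ → ℤ) : Prop :=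
  ∀ i < m, ∃ t ≤ n - 1, ∀ j < n - 1, (j < t → A i j = 1) ∧ (t ≤ j → A i j = 0)

/-- Column domain-wall condition: every guard-extended column of the `(m-1) × n` matrix `B`
is a domain-wall vector. -/
def ColDW (m n : ℕ) (B : ℕ → ℕ → ℤ) : Prop :=
  ∀ j < n, ∃ t ≤ m - 1, ∀ i < m - 1, (i < t → B i j = 1) ∧ (t ≤ i → B i j = 0)

/-- The dual-matrix domain-wall QUBO energy
`E_dⁿⁿ(A,B) = ½ ΣΣ (Δa)² + ½ ΣΣ (Δb)² + ½ ΣΣ (Δa - Δb)²` over `0 ≤ i, j ≤ n-1`. -/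
def Ed (m n : ℕ) (A B : ℕ → ℕ → ℤ) : ℚ :=
  (1 / 2 : ℚ) * ∑ i ∈ Finset.range m, ∑ j ∈ Finset.range n, (dA n A i j : ℚ) ^ 2 +
  (1 / 2 : ℚ) * ∑ i ∈ Finset.range m, ∑ j ∈ Finset.range n, (dB m B i j : ℚ) ^ 2 +
  (1 / 2 : ℚ) * ∑ i ∈ Finset.range m, ∑ j ∈ Finset.range n,
    ((dA n A i j : ℚ) - (dB m B i j : ℚ)) ^ 2



private lemma int_le_sq (x : ℤ) : x ≤ x ^ 2 := by nlinarith [sq_nonneg (x - 1)]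

/-- Telescoping sum. -/
private lemma tele (g : ℕ → ℤ) (n : ℕ) (h0 : g 0 = 1) (hn : g n = 0) :
    ∑ j ∈ Finset.range n, (g j - g (j + 1)) = 1 := by
  rw [Finset.sum_range_sub' g n, h0, hn]; ring

private lemma sq_sum_ge (g : ℕ → ℤ) (n : ℕ) (h0 : g 0 = 1) (hn : g n = 0) :
    1 ≤ ∑ j ∈ Finset.range n, (g j - g (j + 1)) ^ 2 := by
  calc (1 : ℤ) = ∑ j ∈ Finset.range n, (g j - g (j + 1)) := (tele g n h0 hn).symm
    _ ≤ _ := Finset.sum_le_sum fun j _ => int_le_sq _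

/-- If the squared increments sum to 1, the sequence is a single descending step. -/
private lemma dw_forward (g : ℕ → ℤ) (n : ℕ) (h0 : g 0 = 1) (hn : g n = 0)
    (hsq : ∑ j ∈ Finset.range n, (g j - g (j + 1)) ^ 2 = 1) :
    ∃ t < n, ∀ j ≤ n, g j = if j ≤ t then 1 else 0 := by
  set d : ℕ → ℤ := fun j => g j - g (j + 1) with hd
  have hsum : ∑ j ∈ Finset.range n, d j = 1 := tele g n h0 hn
  have hz : ∑ j ∈ Finset.range n, (d j ^ 2 - d j) = 0 := by
    rw [Finset.sum_sub_distrib, hsum, hsq]; ring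
  have hb : ∀ j ∈ Finset.range n, d j ^ 2 - d j = 0 :=
    (Finset.sum_eq_zero_iff_of_nonneg fun j _ => sub_nonneg.mpr (int_le_sq _)).mp hz
  have h01 : ∀ j ∈ Finset.range n, d j = 0 ∨ d j = 1 := by
    intro j hj
    have h2 : d j * (d j - 1) = 0 := by linear_combination hb j hj
    rcases mul_eq_zero.mp h2 with h | h
    · exact Or.inl h
    · right; omega
  obtain ⟨t, ht, hdt⟩ : ∃ t ∈ Finset.range n, d t ≠ 0 :=
    Finset.exists_ne_zero_of_sum_ne_zero (by rw [hsum]; norm_num)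
  have hdt1 : d t = 1 := (h01 t ht).resolve_left hdt
  have herase : ∑ j ∈ (Finset.range n).erase t, d j = 0 := by
    have := Finset.add_sum_erase (Finset.range n) d ht
    rw [hsum, hdt1] at this; linarith
  have hzero : ∀ j ∈ (Finset.range n).erase t, d j = 0 := by
    refine (Finset.sum_eq_zero_iff_of_nonneg fun j hj => ?_).mp herase
    rcases h01 j (Finset.mem_erase.mp hj).2 with h | h <;> simp [h]
  have hdall : ∀ j < n, d j = if j = t then 1 else 0 := by
    intro j hj
    by_cases hjt : j = t
    · simp [hjt, hdt1]
    · simp [hjt]; exact hzero j (Finset.mem_erase.mpr ⟨hjt, Finset.mem_range.mpr hj⟩)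
  refine ⟨t, Finset.mem_range.mp ht, fun j hj => ?_⟩
  have htel : ∑ k ∈ Finset.range j, (g k - g (k + 1)) = g 0 - g j := Finset.sum_range_sub' g j
  have hval : ∑ k ∈ Finset.range j, (g k - g (k + 1)) = if t < j then 1 else 0 := by
    rw [Finset.sum_congr rfl fun k hk => hdall k (lt_of_lt_of_le (Finset.mem_range.mp hk) hj)]
    rw [Finset.sum_ite_eq' (Finset.range j) t fun _ => (1 : ℤ)]
    simp [Finset.mem_range]
  rw [hval] at htel
  rw [h0] at htel
  split_ifs with h
  · have : ¬ t < j := by omega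
    simp [this] at htel; linarith
  · have : t < j := by omega
    simp [this] at htel; linarith

/-- A single descending step has squared increments summing to 1. -/
private lemma dw_backward (g : ℕ → ℤ) (n t : ℕ) (ht : t < n)
    (hg : ∀ j ≤ n, g j = if j ≤ t then 1 else 0) :
    ∑ j ∈ Finset.range n, (g j - g (j + 1)) ^ 2 = 1 := by
  have : ∀ j ∈ Finset.range n, (g j - g (j + 1)) ^ 2 = if j = t then 1 else 0 := by
    intro j hj
    have hj' := Finset.mem_range.mp hj
    rw [hg j (by omega), hg (j + 1) (by omega)]
    split_ifs with h1 h2 h3 <;> first | (exfalso; omega) | norm_num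
  rw [Finset.sum_congr rfl this, Finset.sum_ite_eq' (Finset.range n) t fun _ => (1 : ℤ)]
  simp [Finset.mem_range.mpr ht]

/-- From the domain-wall pattern of the inner entries, the guard-extended vector is a step. -/
private lemma g_of_dw (n t : ℕ) (hn : 1 ≤ n) (ht : t ≤ n - 1) (f : ℕ → ℤ)
    (hf : ∀ j < n - 1, (j < t → f j = 1) ∧ (t ≤ j → f j = 0)) :
    ∀ j, (if j = 0 then (1 : ℤ) else if j < n then f (j - 1) else 0) =
      if j ≤ t then 1 else 0 := by
  intro j
  rcases Nat.eq_zero_or_pos j with rfl | hj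
  · simp
  by_cases hjn : j < n
  · have hne : j ≠ 0 := by omega
    have hj1 : j - 1 < n - 1 := by omega
    obtain ⟨h1, h2⟩ := hf (j - 1) hj1
    simp only [hne, if_false, hjn, if_true]
    by_cases hle : j ≤ t
    · rw [h1 (by omega)]; simp [hle]
    · rw [h2 (by omega)]; simp [hle]
  · have hne : j ≠ 0 := by omega
    have : ¬ j ≤ t := by omega
    simp [hne, hjn, this]

/-- From the step pattern of the guard-extended vector, the inner entries are domain-wall. -/
private lemma dw_of_g (n t : ℕ) (f : ℕ → ℤ)
    (hg : ∀ j ≤ n, (if j = 0 then (1 : ℤ) else if j < n then f (j - 1) else 0) =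
      if j ≤ t then 1 else 0) :
    ∀ j < n - 1, (j < t → f j = 1) ∧ (t ≤ j → f j = 0) := by
  intro j hj
  have h := hg (j + 1) (by omega)
  have h1 : j + 1 ≠ 0 := by omega
  have h2 : j + 1 < n := by omega
  simp only [h1, if_false, h2, if_true, Nat.add_sub_cancel] at h
  constructor
  · intro hlt
    have hle' : j + 1 ≤ t := by omega
    rw [h, if_pos hle']
  · intro hge
    have hle' : ¬ j + 1 ≤ t := by omega
    rw [h, if_neg hle']

private lemma each_eq_one {n : ℕ} (r : ℕ → ℤ) (h1 : ∀ i < n, 1 ≤ r i)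
    (h2 : ∑ i ∈ Finset.range n, r i = n) : ∀ i < n, r i = 1 := by
  have hz : ∑ i ∈ Finset.range n, (r i - 1) = 0 := by
    rw [Finset.sum_sub_distrib, h2]; simp
  have := (Finset.sum_eq_zero_iff_of_nonneg fun i hi =>
    sub_nonneg.mpr (h1 i (Finset.mem_range.mp hi))).mp hz
  intro i hi
  have := this i (Finset.mem_range.mpr hi); omega

private lemma nested_zero {n : ℕ} (f : ℕ → ℕ → ℤ)
    (h : ∑ i ∈ Finset.range n, ∑ j ∈ Finset.range n, f i j ^ 2 = 0) :
    ∀ i < n, ∀ j < n, f i j = 0 := by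
  intro i hi j hj
  have houter := (Finset.sum_eq_zero_iff_of_nonneg fun i _ =>
    Finset.sum_nonneg fun j _ => sq_nonneg (f i j)).mp h i (Finset.mem_range.mpr hi)
  have hinner := (Finset.sum_eq_zero_iff_of_nonneg fun j _ =>
    sq_nonneg (f i j)).mp houter j (Finset.mem_range.mpr hj)
  exact pow_eq_zero_iff (by norm_num) |>.mp hinner


/-- For an `n × (n-1)` binary matrix `A` and an `(n-1) × n` binary matrix `B` (with guard
bits), the energy `E_dⁿⁿ(A,B)` is at least `n`, and equals `n` iff every guard-extended row
of `A` is a domain-wall vector, every guard-extended column of `B` is a domain-wall vector,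
and `Δa_{i,j} = Δb_{i,j}` for all `i, j`. -/
theorem dual_matrix_domain_wall_energy (n : ℕ) (hn : 1 ≤ n) (A B : ℕ → ℕ → ℤ)
    (hA : ∀ i < n, ∀ j < n - 1, A i j = 0 ∨ A i j = 1)
    (hB : ∀ i < n - 1, ∀ j < n, B i j = 0 ∨ B i j = 1) :
    (n : ℚ) ≤ Ed n n A B ∧
    (Ed n n A B = n ↔
      RowDW n n A ∧ ColDW n n B ∧ ∀ i < n, ∀ j < n, dA n A i j = dB n B i j) := by
  classical
  set SA : ℤ := ∑ i ∈ Finset.range n, ∑ j ∈ Finset.range n, dA n A i j ^ 2 with hSAdef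
  set SB : ℤ := ∑ i ∈ Finset.range n, ∑ j ∈ Finset.range n, dB n B i j ^ 2 with hSBdef
  set SC : ℤ := ∑ i ∈ Finset.range n, ∑ j ∈ Finset.range n,
    (dA n A i j - dB n B i j) ^ 2 with hSCdef
  have hEd : Ed n n A B = ((SA + SB + SC : ℤ) : ℚ) / 2 := by
    rw [hSAdef, hSBdef, hSCdef]; unfold Ed; push_cast; ring
  -- guard values
  have hgA0 : ∀ i, gA n A i 0 = 1 := fun i => by simp [gA]
  have hgAn : ∀ i, gA n A i n = 0 := fun i => by
    unfold gA; rw [if_neg (by omega), if_neg (by omega)]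
  have hgB0 : ∀ j, gB n B 0 j = 1 := fun j => by simp [gB]
  have hgBn : ∀ j, gB n B n j = 0 := fun j => by
    unfold gB; rw [if_neg (by omega), if_neg (by omega)]
  -- lower bounds per row/column
  have hrowge : ∀ i, (1 : ℤ) ≤ ∑ j ∈ Finset.range n, dA n A i j ^ 2 := fun i =>
    sq_sum_ge (gA n A i) n (hgA0 i) (hgAn i)
  have hcolge : ∀ j, (1 : ℤ) ≤ ∑ i ∈ Finset.range n, dB n B i j ^ 2 := fun j =>
    sq_sum_ge (fun k => gB n B k j) n (hgB0 j) (hgBn j)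
  have hSB_swap : SB = ∑ j ∈ Finset.range n, ∑ i ∈ Finset.range n, dB n B i j ^ 2 :=
    Finset.sum_comm
  have hSA_ge : (n : ℤ) ≤ SA := by
    calc (n : ℤ) = ∑ _i ∈ Finset.range n, (1 : ℤ) := by simp
      _ ≤ SA := Finset.sum_le_sum fun i _ => hrowge i
  have hSB_ge : (n : ℤ) ≤ SB := by
    rw [hSB_swap]
    calc (n : ℤ) = ∑ _j ∈ Finset.range n, (1 : ℤ) := by simp
      _ ≤ _ := Finset.sum_le_sum fun j _ => hcolge j
  have hSC_ge : (0 : ℤ) ≤ SC :=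
    Finset.sum_nonneg fun _ _ => Finset.sum_nonneg fun _ _ => sq_nonneg _
  have hEdn : Ed n n A B = n ↔ SA + SB + SC = 2 * n := by
    rw [hEd]
    constructor
    · intro h
      have h' : ((SA + SB + SC : ℤ) : ℚ) = 2 * (n : ℚ) := by linarith
      exact_mod_cast h'
    · intro h; rw [h]; push_cast; ring
  constructor
  · rw [hEd]
    have h2n : (2 * n : ℤ) ≤ SA + SB + SC := by linarith
    have h2n' : (2 * (n : ℚ)) ≤ ((SA + SB + SC : ℤ) : ℚ) := by exact_mod_cast h2n
    linarith
  rw [hEdn]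
  constructor
  · intro hS
    have hSAe : SA = n := by linarith
    have hSBe : SB = n := by linarith
    have hSCe : SC = 0 := by linarith
    have hrow : ∀ i < n, ∑ j ∈ Finset.range n, dA n A i j ^ 2 = 1 :=
      each_eq_one (fun k => ∑ j ∈ Finset.range n, dA n A k j ^ 2)
        (fun k _ => hrowge k) (hSAdef.symm.trans hSAe)
    have hcol : ∀ j < n, ∑ i ∈ Finset.range n, dB n B i j ^ 2 = 1 :=
      each_eq_one (fun k => ∑ i ∈ Finset.range n, dB n B i k ^ 2)
        (fun k _ => hcolge k) (hSB_swap.symm.trans hSBe)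
    refine ⟨?_, ?_, ?_⟩
    · -- RowDW
      intro i hi
      obtain ⟨t, htn, hgt⟩ := dw_forward (gA n A i) n (hgA0 i) (hgAn i) (hrow i hi)
      exact ⟨t, by omega, dw_of_g n t (A i) hgt⟩
    · -- ColDW
      intro j hj
      obtain ⟨t, htn, hgt⟩ := dw_forward (fun k => gB n B k j) n (hgB0 j) (hgBn j) (hcol j hj)
      exact ⟨t, by omega, dw_of_g n t (fun k => B k j) hgt⟩
    · -- dA = dB
      intro i hi j hj
      have h0 := nested_zero (fun a b => dA n A a b - dB n B a b)
        (hSCdef.symm.trans hSCe) i hi j hj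
      exact sub_eq_zero.mp h0
  · rintro ⟨hR, hC, hE⟩
    have hSAe : SA = (n : ℤ) := by
      have h1 : ∀ i ∈ Finset.range n, ∑ j ∈ Finset.range n, dA n A i j ^ 2 = 1 := by
        intro i hi
        obtain ⟨t, ht, hdw⟩ := hR i (Finset.mem_range.mp hi)
        exact dw_backward (gA n A i) n t (by omega)
          (fun j _ => g_of_dw n t hn ht (A i) hdw j)
      rw [hSAdef, Finset.sum_congr rfl h1]; simp
    have hSBe : SB = (n : ℤ) := by
      have h1 : ∀ j ∈ Finset.range n, ∑ i ∈ Finset.range n, dB n B i j ^ 2 = 1 := by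
        intro j hj
        obtain ⟨t, ht, hdw⟩ := hC j (Finset.mem_range.mp hj)
        exact dw_backward (fun k => gB n B k j) n t (by omega)
          (fun i _ => g_of_dw n t hn ht (fun k => B k j) hdw i)
      rw [hSB_swap, Finset.sum_congr rfl h1]; simp
    have hSCe : SC = 0 := by
      rw [hSCdef]
      refine Finset.sum_eq_zero fun i hi => Finset.sum_eq_zero fun j hj => ?_
      rw [hE i (Finset.mem_range.mp hi) j (Finset.mem_range.mp hj)]; ring
    omega
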